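/- Let G be a graph with m edges and H' the split graph obtained from the bipartite reduction graph H (vertices x_v, y_e with y_e adjacent to the x-vertices of its endpoints, and m² leaves per y_e) by adding all edges between distinct y-vertices, making Y a clique. If G has a 2-coloring with exactly k₁ red and exactly k₂ blue edges (k₁ + k₂ ≤ m), then H' has a 2-coloring with at least 2k₁ + m²k₁ + C(k₁, 2) red edges and at least (m + k₂ - k₁) + (m - k₁)m² + C(m - k₁, 2) blue edges. -/

import Mathlib

open Finset

attribute [local instance] Classical.propDecidable

lemma card_filter_prod {α β : Type*} [Fintype α] [Fintype β] (P : α × β → Prop)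
    [DecidablePred P] [∀ a, DecidablePred fun b : β => P (a, b)] :
    #(univ.filter P) = ∑ a : α, #(univ.filter fun b : β => P (a, b)) := by
  rw [Finset.card_eq_sum_card_fiberwise (f := Prod.fst) (t := univ) (fun x _ => mem_univ _)]
  refine Finset.sum_congr rfl fun a _ => ?_
  refine Finset.card_bij' (fun p _ => p.2) (fun b _ => (a, b)) ?_ ?_ ?_ ?_
  · rintro ⟨x, y⟩ hp
    simp only [mem_filter, mem_univ, true_and] at hp ⊢
    obtain ⟨h1, h2⟩ := hp
    subst h2; exact h1
  · intro b hb
    simp only [mem_filter, mem_univ, true_and] at hb ⊢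
    exact ⟨hb, trivial⟩
  · rintro ⟨x, y⟩ hp
    simp only [mem_filter, mem_univ, true_and] at hp
    simp [hp.2]
  · intro b hb; rfl

lemma card_sym2_nondiag {α : Type*} (s : Finset α)
    [DecidablePred fun p : Sym2 α => ¬ p.IsDiag] :
    #(s.sym2.filter fun p => ¬ p.IsDiag) = (#s).choose 2 := by
  have hdiag : s.sym2.filter (fun p => p.IsDiag) = s.image Sym2.diag := by
    ext p
    induction p using Sym2.ind with
    | _ a b =>
      simp only [mem_filter, mem_sym2_iff, Sym2.mk_isDiag_iff, mem_image, Sym2.mem_iff]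
      constructor
      · rintro ⟨h1, rfl⟩
        exact ⟨a, h1 a (Or.inl rfl), rfl⟩
      · rintro ⟨x, hx, hxp⟩
        have : a = x ∧ b = x := by
          have := (Sym2.eq_iff).1 hxp.symm
          tauto
        obtain ⟨rfl, rfl⟩ := this
        exact ⟨by rintro c (rfl | rfl) <;> exact hx, rfl⟩
  have h1 : #(s.sym2.filter fun p => p.IsDiag) = #s := by
    rw [hdiag, card_image_of_injective _ Sym2.diag_injective]
  have h2 := card_filter_add_card_filter_not (s := s.sym2) (p := fun p => p.IsDiag)
  rw [card_sym2] at h2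
  have h3 : (#s + 1).choose 2 = #s + (#s).choose 2 := by
    rw [show (2:ℕ) = 1 + 1 from rfl, Nat.choose_succ_succ, Nat.choose_one_right]
  omega

lemma card_filter_subtype {α : Type*} (s : Set α) [Fintype s] (t : Finset α)
    (h : ∀ x, x ∈ s ↔ x ∈ t) (P : α → Prop) [DecidablePred P]
    [DecidablePred fun e : s => P e.val] :
    #(univ.filter fun e : s => P e.val) = #(t.filter P) := by
  refine Finset.card_bij (fun e _ => e.val) ?_ ?_ ?_
  · rintro ⟨x, hx⟩ hm
    simp only [mem_filter, mem_univ, true_and] at hm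
    exact mem_filter.2 ⟨(h x).1 hx, hm⟩
  · rintro ⟨x, _⟩ _ ⟨y, _⟩ _ hxy
    simpa using hxy
  · intro b hb
    simp only [mem_filter] at hb
    exact ⟨⟨b, (h b).2 hb.1⟩, by simp [hb.2], rfl⟩

/-- The number of edges of `G` whose endpoints are all colored `c` by `f`. -/
noncomputable def monoEdges {V : Type*} [Fintype V] (G : SimpleGraph V)
    (f : V → Bool) (c : Bool) : ℕ :=
  (G.edgeFinset.filter fun e => ∀ v ∈ e, f v = c).card

/-- The split reduction graph `H'`: a vertex `x_v` for each vertex `v` of `G`,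
a vertex `y_e` for each edge `e` of `G` adjacent to the `x`-vertices of its two
endpoints, `m²` pendant leaves attached to each `y_e`, and all edges between
distinct `y`-vertices (so `Y` is a clique and `X ∪ Z` is independent). -/
noncomputable def splitRed {V : Type*} [Fintype V] (G : SimpleGraph V) :
    SimpleGraph (V ⊕ (↥G.edgeSet ⊕ ↥G.edgeSet × Fin (G.edgeFinset.card ^ 2))) where
  Adj x y :=
    match x, y with
    | .inl u, .inr (.inl e) => u ∈ (e : Sym2 V)
    | .inr (.inl e), .inl u => u ∈ (e : Sym2 V)
    | .inr (.inl e), .inr (.inl e') => e ≠ e'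
    | .inr (.inl e), .inr (.inr (e', _)) => e = e'
    | .inr (.inr (e', _)), .inr (.inl e) => e = e'
    | _, _ => False
  symm := ⟨by
    rintro (u | e | ⟨e, i⟩) (v | e' | ⟨e', j⟩) h <;> simp_all <;> exact h ∘ Eq.symm⟩
  loopless := ⟨by
    rintro (u | e | ⟨e, i⟩) h <;> simp_all⟩

namespace SplitAux

variable {V : Type*} [Fintype V] (G : SimpleGraph V)

/-- The two endpoints of an edge. -/
noncomputable def epts (e : ↥G.edgeSet) : V × V := Quot.out (e : Sym2 V)

lemma epts_spec (e : ↥G.edgeSet) : (e : Sym2 V) = s((epts G e).1, (epts G e).2) := by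
  unfold epts
  exact (Quot.out_eq _).symm

lemma epts_ne (e : ↥G.edgeSet) : (epts G e).1 ≠ (epts G e).2 := by
  have h := G.not_isDiag_of_mem_edgeSet e.2
  rw [epts_spec G e] at h
  simpa [Sym2.mk_isDiag_iff] using h

lemma epts_fst_mem (e : ↥G.edgeSet) : (epts G e).1 ∈ (e : Sym2 V) := by
  rw [epts_spec G e]; exact Sym2.mem_mk_left _ _

lemma epts_snd_mem (e : ↥G.edgeSet) : (epts G e).2 ∈ (e : Sym2 V) := by
  rw [epts_spec G e]; exact Sym2.mem_mk_right _ _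

lemma mem_epts (e : ↥G.edgeSet) (v : V) (hv : v ∈ (e : Sym2 V)) :
    v = (epts G e).1 ∨ v = (epts G e).2 := by
  rw [epts_spec G e] at hv
  exact Sym2.mem_iff.1 hv

/-- vertex type of the split reduction graph -/
abbrev W := V ⊕ (↥G.edgeSet ⊕ ↥G.edgeSet × Fin (G.edgeFinset.card ^ 2))

noncomputable def xyMap (p : ↥G.edgeSet × Bool) : Sym2 (W G) :=
  s(Sum.inl (if p.2 then (epts G p.1).1 else (epts G p.1).2), Sum.inr (Sum.inl p.1))

noncomputable def yzMap (p : ↥G.edgeSet × Fin (G.edgeFinset.card ^ 2)) : Sym2 (W G) :=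
  s(Sum.inr (Sum.inl p.1), Sum.inr (Sum.inr p))

noncomputable def yyMap : Sym2 ↥G.edgeSet → Sym2 (W G) :=
  Sym2.map (fun e => Sum.inr (Sum.inl e))

lemma xyMap_inj : Function.Injective (xyMap G) := by
  rintro ⟨e, b⟩ ⟨e', b'⟩ h
  simp only [xyMap, Sym2.eq_iff] at h
  rcases h with ⟨h1, h2⟩ | ⟨h1, h2⟩
  · simp only [Sum.inr.injEq, Sum.inl.injEq] at h1 h2
    subst h2
    have := epts_ne G e
    cases b <;> cases b' <;> simp_all
  · simp at h1

lemma yzMap_inj : Function.Injective (yzMap G) := by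
  rintro ⟨e, i⟩ ⟨e', i'⟩ h
  simp only [yzMap, Sym2.eq_iff] at h
  rcases h with ⟨h1, h2⟩ | ⟨h1, h2⟩ <;> simp_all

lemma yyMap_inj : Function.Injective (yyMap G) :=
  Sym2.map.injective fun a b h => by simpa using h

lemma adj_xy (v : V) (e : ↥G.edgeSet) :
    (splitRed G).Adj (Sum.inl v) (Sum.inr (Sum.inl e)) ↔ v ∈ (e : Sym2 V) := Iff.rfl

lemma adj_yy (e e' : ↥G.edgeSet) :
    (splitRed G).Adj (Sum.inr (Sum.inl e)) (Sum.inr (Sum.inl e')) ↔ e ≠ e' := Iff.rfl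

lemma adj_yz (e e' : ↥G.edgeSet) (i : Fin (G.edgeFinset.card ^ 2)) :
    (splitRed G).Adj (Sum.inr (Sum.inl e)) (Sum.inr (Sum.inr (e', i))) ↔ e = e' := Iff.rfl

/-- the witnessing coloring -/
noncomputable def gcol (f : V → Bool) : W G → Bool
  | Sum.inl v => f v
  | Sum.inr (Sum.inl e) => if ∀ x ∈ (e : Sym2 V), f x = true then true else false
  | Sum.inr (Sum.inr (e, _)) => if ∀ x ∈ (e : Sym2 V), f x = true then true else false

lemma gcol_x (f : V → Bool) (v : V) : gcol G f (Sum.inl v) = f v := rfl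
lemma gcol_y (f : V → Bool) (e : ↥G.edgeSet) :
    gcol G f (Sum.inr (Sum.inl e)) = if ∀ x ∈ (e : Sym2 V), f x = true then true else false := rfl
lemma gcol_z (f : V → Bool) (e : ↥G.edgeSet) (i : Fin (G.edgeFinset.card ^ 2)) :
    gcol G f (Sum.inr (Sum.inr (e, i))) = if ∀ x ∈ (e : Sym2 V), f x = true then true else false := rfl

end SplitAux

set_option maxHeartbeats 2000000 in
open SplitAux in
theorem split_reduction_forward {V : Type*} [Fintype V] (G : SimpleGraph V)
    (k₁ k₂ : ℕ) (hkm : k₁ + k₂ ≤ G.edgeFinset.card) (f : V → Bool)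
    (hred : monoEdges G f true = k₁) (hblue : monoEdges G f false = k₂) :
    ∃ g : V ⊕ (↥G.edgeSet ⊕ ↥G.edgeSet × Fin (G.edgeFinset.card ^ 2)) → Bool,
      monoEdges (splitRed G) g true ≥
        2 * k₁ + G.edgeFinset.card ^ 2 * k₁ + k₁.choose 2 ∧
      monoEdges (splitRed G) g false ≥
        (G.edgeFinset.card + k₂ - k₁) +
          (G.edgeFinset.card - k₁) * G.edgeFinset.card ^ 2 +
          (G.edgeFinset.card - k₁).choose 2 := by
  -- common counting facts
  have memEF : ∀ x : Sym2 V, x ∈ G.edgeSet ↔ x ∈ G.edgeFinset := fun x =>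
    (SimpleGraph.mem_edgeFinset).symm
  have hk1 : #((univ : Finset ↥G.edgeSet).filter
      fun e : ↥G.edgeSet => ∀ x ∈ (e : Sym2 V), f x = true) = k₁ := by
    rw [card_filter_subtype G.edgeSet G.edgeFinset memEF (fun s : Sym2 V => ∀ x ∈ s, f x = true),
      ← hred]
    unfold monoEdges
    congr 1
  have hk2 : #((univ : Finset ↥G.edgeSet).filter
      fun e : ↥G.edgeSet => ∀ x ∈ (e : Sym2 V), f x = false) = k₂ := by
    rw [card_filter_subtype G.edgeSet G.edgeFinset memEF (fun s : Sym2 V => ∀ x ∈ s, f x = false),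
      ← hblue]
    unfold monoEdges
    congr 1
  have hcardE : (univ : Finset ↥G.edgeSet).card = G.edgeFinset.card := by
    rw [Finset.card_univ]
    exact (SimpleGraph.edgeFinset_card).symm
  have hBnotR : ∀ e : ↥G.edgeSet, (∀ x ∈ (e : Sym2 V), f x = false) →
      ¬ (∀ x ∈ (e : Sym2 V), f x = true) := by
    intro e hB hR
    have h1 := hB _ (epts_fst_mem G e)
    have h2 := hR _ (epts_fst_mem G e)
    rw [h1] at h2
    exact Bool.false_ne_true h2
  have hnR : #((univ : Finset ↥G.edgeSet).filter
      fun e : ↥G.edgeSet => ¬ ∀ x ∈ (e : Sym2 V), f x = true) =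
      G.edgeFinset.card - k₁ := by
    have h := card_filter_add_card_filter_not (s := (univ : Finset ↥G.edgeSet))
      (p := fun e : ↥G.edgeSet => ∀ x ∈ (e : Sym2 V), f x = true)
    rw [hk1, hcardE] at h
    omega
  have hmixed : #((univ : Finset ↥G.edgeSet).filter fun e : ↥G.edgeSet =>
      ¬ (∀ x ∈ (e : Sym2 V), f x = true) ∧ ¬ (∀ x ∈ (e : Sym2 V), f x = false)) =
      G.edgeFinset.card - k₁ - k₂ := by
    have horb : #((univ : Finset ↥G.edgeSet).filter fun e : ↥G.edgeSet =>
        (∀ x ∈ (e : Sym2 V), f x = true) ∨ (∀ x ∈ (e : Sym2 V), f x = false)) = k₁ + k₂ := by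
      rw [filter_or, card_union_of_disjoint, hk1, hk2]
      rw [Finset.disjoint_left]
      intro a ha hb
      rw [mem_filter] at ha hb
      exact hBnotR a hb.2 ha.2
    have hfun : ((univ : Finset ↥G.edgeSet).filter fun e : ↥G.edgeSet =>
        ¬ (∀ x ∈ (e : Sym2 V), f x = true) ∧ ¬ (∀ x ∈ (e : Sym2 V), f x = false)) =
        (univ : Finset ↥G.edgeSet).filter fun e : ↥G.edgeSet =>
        ¬ ((∀ x ∈ (e : Sym2 V), f x = true) ∨ (∀ x ∈ (e : Sym2 V), f x = false)) :=
      filter_congr fun e _ => by tauto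
    rw [hfun]
    have h := card_filter_add_card_filter_not (s := (univ : Finset ↥G.edgeSet))
      (p := fun e : ↥G.edgeSet =>
        (∀ x ∈ (e : Sym2 V), f x = true) ∨ (∀ x ∈ (e : Sym2 V), f x = false))
    rw [horb, hcardE] at h
    omega
  -- the membership helper
  have hmem : ∀ (a b : W G) (c : Bool), (splitRed G).Adj a b → gcol G f a = c →
      gcol G f b = c →
      s(a, b) ∈ (splitRed G).edgeSet ∧ ∀ v ∈ s(a, b), gcol G f v = c := by
    intro a b c hadj ha hb
    refine ⟨(SimpleGraph.mem_edgeSet _).2 hadj, ?_⟩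
    intro v hv
    rcases Sym2.mem_iff.1 hv with rfl | rfl <;> assumption
  have hmono : ∀ (S : Finset (Sym2 (W G))) (c : Bool),
      (∀ x ∈ S, x ∈ (splitRed G).edgeSet ∧ ∀ v ∈ x, gcol G f v = c) →
      S.card ≤ monoEdges (splitRed G) (gcol G f) c := by
    intro S c hS
    unfold monoEdges
    apply card_le_card
    intro x hx
    simp only [mem_filter, SimpleGraph.mem_edgeFinset]
    exact hS x hx
  refine ⟨gcol G f, ?_, ?_⟩
  · -- red side
    set S1 := ((univ : Finset (↥G.edgeSet × Bool)).filter
      fun p : ↥G.edgeSet × Bool => ∀ x ∈ (p.1 : Sym2 V), f x = true).image (xyMap G) with hS1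
    set S2 := ((univ : Finset (↥G.edgeSet × Fin (G.edgeFinset.card ^ 2))).filter
      fun p : ↥G.edgeSet × Fin (G.edgeFinset.card ^ 2) =>
        ∀ x ∈ (p.1 : Sym2 V), f x = true).image (yzMap G) with hS2
    set S3 := (((univ : Finset ↥G.edgeSet).filter
      fun e : ↥G.edgeSet => ∀ x ∈ (e : Sym2 V), f x = true).sym2.filter
        fun p => ¬ p.IsDiag).image (yyMap G) with hS3
    have hS1sub : ∀ x ∈ S1, x ∈ (splitRed G).edgeSet ∧ ∀ v ∈ x, gcol G f v = true := by
      intro x hx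
      obtain ⟨⟨e, b⟩, hp, rfl⟩ := mem_image.1 hx
      simp only [mem_filter, mem_univ, true_and] at hp
      simp only [xyMap]
      refine hmem _ _ _ ((adj_xy G _ _).2 ?_) ?_ ?_
      · cases b
        · exact epts_snd_mem G e
        · exact epts_fst_mem G e
      · rw [gcol_x]
        cases b
        · exact hp _ (epts_snd_mem G e)
        · exact hp _ (epts_fst_mem G e)
      · rw [gcol_y, if_pos hp]
    have hS2sub : ∀ x ∈ S2, x ∈ (splitRed G).edgeSet ∧ ∀ v ∈ x, gcol G f v = true := by
      intro x hx
      obtain ⟨⟨e, i⟩, hp, rfl⟩ := mem_image.1 hx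
      simp only [mem_filter, mem_univ, true_and] at hp
      simp only [yzMap]
      refine hmem _ _ _ ((adj_yz G e e i).2 rfl) ?_ ?_
      · rw [gcol_y, if_pos hp]
      · rw [gcol_z, if_pos hp]
    have hS3sub : ∀ x ∈ S3, x ∈ (splitRed G).edgeSet ∧ ∀ v ∈ x, gcol G f v = true := by
      intro x hx
      obtain ⟨p, hp, rfl⟩ := mem_image.1 hx
      induction p using Sym2.ind with
      | _ a b =>
        simp only [mem_filter, mem_sym2_iff, Sym2.mk_isDiag_iff, Sym2.mem_iff] at hp
        obtain ⟨hmemab, hne⟩ := hp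
        have ha := hmemab a (Or.inl rfl)
        have hb := hmemab b (Or.inr rfl)
        simp only [mem_filter, mem_univ, true_and] at ha hb
        simp only [yyMap, Sym2.map_pair_eq]
        refine hmem _ _ _ ((adj_yy G a b).2 hne) ?_ ?_
        · rw [gcol_y, if_pos ha]
        · rw [gcol_y, if_pos hb]
    have hd12 : Disjoint S1 S2 := by
      rw [Finset.disjoint_left]
      intro x hx1 hx2
      obtain ⟨⟨e, b⟩, _, rfl⟩ := mem_image.1 hx1
      obtain ⟨⟨e', i⟩, _, h⟩ := mem_image.1 hx2
      simp [xyMap, yzMap, Sym2.eq_iff] at h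
    have hd13 : Disjoint S1 S3 := by
      rw [Finset.disjoint_left]
      intro x hx1 hx3
      obtain ⟨⟨e, b⟩, _, rfl⟩ := mem_image.1 hx1
      obtain ⟨p, _, h⟩ := mem_image.1 hx3
      induction p using Sym2.ind with
      | _ a a' => simp [xyMap, yyMap, Sym2.map_pair_eq, Sym2.eq_iff] at h
    have hd23 : Disjoint S2 S3 := by
      rw [Finset.disjoint_left]
      intro x hx2 hx3
      obtain ⟨⟨e, i⟩, _, rfl⟩ := mem_image.1 hx2
      obtain ⟨p, _, h⟩ := mem_image.1 hx3
      induction p using Sym2.ind with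
      | _ a a' => simp [yzMap, yyMap, Sym2.map_pair_eq, Sym2.eq_iff] at h
    have hcard1 : #S1 = 2 * k₁ := by
      rw [hS1, card_image_of_injective _ (xyMap_inj G), card_filter_prod
        (fun p : ↥G.edgeSet × Bool => ∀ x ∈ (p.1 : Sym2 V), f x = true)]
      have heach : ∀ e : ↥G.edgeSet,
          #(univ.filter fun _ : Bool => ∀ x ∈ (e : Sym2 V), f x = true) =
          if (∀ x ∈ (e : Sym2 V), f x = true) then 2 else 0 := by
        intro e
        by_cases h : ∀ x ∈ (e : Sym2 V), f x = true
        · rw [if_pos h, Finset.filter_true_of_mem (fun x _ => h), Finset.card_univ,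
            Fintype.card_bool]
        · rw [if_neg h, Finset.filter_false_of_mem (fun x _ => h), Finset.card_empty]
      rw [Finset.sum_congr rfl (fun e _ => heach e), ← Finset.sum_filter, Finset.sum_const,
        smul_eq_mul, hk1, Nat.mul_comm]
    have hcard2 : #S2 = G.edgeFinset.card ^ 2 * k₁ := by
      rw [hS2, card_image_of_injective _ (yzMap_inj G), card_filter_prod
        (fun p : ↥G.edgeSet × Fin (G.edgeFinset.card ^ 2) => ∀ x ∈ (p.1 : Sym2 V), f x = true)]
      have heach : ∀ e : ↥G.edgeSet,
          #(univ.filter fun _ : Fin (G.edgeFinset.card ^ 2) =>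
            ∀ x ∈ (e : Sym2 V), f x = true) =
          if (∀ x ∈ (e : Sym2 V), f x = true) then G.edgeFinset.card ^ 2 else 0 := by
        intro e
        by_cases h : ∀ x ∈ (e : Sym2 V), f x = true
        · rw [if_pos h, Finset.filter_true_of_mem (fun x _ => h), Finset.card_univ,
            Fintype.card_fin]
        · rw [if_neg h, Finset.filter_false_of_mem (fun x _ => h), Finset.card_empty]
      rw [Finset.sum_congr rfl (fun e _ => heach e), ← Finset.sum_filter, Finset.sum_const,
        smul_eq_mul, hk1, Nat.mul_comm]
    have hcard3 : #S3 = k₁.choose 2 := by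
      rw [hS3, card_image_of_injective _ (yyMap_inj G), card_sym2_nondiag
        ((univ : Finset ↥G.edgeSet).filter
          fun e : ↥G.edgeSet => ∀ x ∈ (e : Sym2 V), f x = true), hk1]
    calc 2 * k₁ + G.edgeFinset.card ^ 2 * k₁ + k₁.choose 2
        = #S1 + #S2 + #S3 := by rw [hcard1, hcard2, hcard3]
      _ = #(S1 ∪ S2 ∪ S3) := by
          rw [card_union_of_disjoint (Finset.disjoint_union_left.2 ⟨hd13, hd23⟩),
            card_union_of_disjoint hd12]
      _ ≤ monoEdges (splitRed G) (gcol G f) true := by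
          refine hmono _ _ ?_
          intro x hx
          rcases mem_union.1 hx with h | h
          · rcases mem_union.1 h with h | h
            · exact hS1sub x h
            · exact hS2sub x h
          · exact hS3sub x h
  · -- blue side
    set T1 := ((univ : Finset (↥G.edgeSet × Bool)).filter
      fun p : ↥G.edgeSet × Bool => (¬ ∀ x ∈ (p.1 : Sym2 V), f x = true) ∧
        f (if p.2 then (epts G p.1).1 else (epts G p.1).2) = false).image (xyMap G) with hT1
    set T2 := ((univ : Finset (↥G.edgeSet × Fin (G.edgeFinset.card ^ 2))).filter
      fun p : ↥G.edgeSet × Fin (G.edgeFinset.card ^ 2) =>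
        ¬ ∀ x ∈ (p.1 : Sym2 V), f x = true).image (yzMap G) with hT2
    set T3 := (((univ : Finset ↥G.edgeSet).filter
      fun e : ↥G.edgeSet => ¬ ∀ x ∈ (e : Sym2 V), f x = true).sym2.filter
        fun p => ¬ p.IsDiag).image (yyMap G) with hT3
    have hT1sub : ∀ x ∈ T1, x ∈ (splitRed G).edgeSet ∧ ∀ v ∈ x, gcol G f v = false := by
      intro x hx
      obtain ⟨⟨e, b⟩, hp, rfl⟩ := mem_image.1 hx
      simp only [mem_filter, mem_univ, true_and] at hp
      simp only [xyMap]
      refine hmem _ _ _ ((adj_xy G _ _).2 ?_) ?_ ?_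
      · cases b
        · exact epts_snd_mem G e
        · exact epts_fst_mem G e
      · rw [gcol_x]
        exact hp.2
      · rw [gcol_y, if_neg hp.1]
    have hT2sub : ∀ x ∈ T2, x ∈ (splitRed G).edgeSet ∧ ∀ v ∈ x, gcol G f v = false := by
      intro x hx
      obtain ⟨⟨e, i⟩, hp, rfl⟩ := mem_image.1 hx
      simp only [mem_filter, mem_univ, true_and] at hp
      simp only [yzMap]
      refine hmem _ _ _ ((adj_yz G e e i).2 rfl) ?_ ?_
      · rw [gcol_y, if_neg hp]
      · rw [gcol_z, if_neg hp]
    have hT3sub : ∀ x ∈ T3, x ∈ (splitRed G).edgeSet ∧ ∀ v ∈ x, gcol G f v = false := by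
      intro x hx
      obtain ⟨p, hp, rfl⟩ := mem_image.1 hx
      induction p using Sym2.ind with
      | _ a b =>
        simp only [mem_filter, mem_sym2_iff, Sym2.mk_isDiag_iff, Sym2.mem_iff] at hp
        obtain ⟨hmemab, hne⟩ := hp
        have ha := hmemab a (Or.inl rfl)
        have hb := hmemab b (Or.inr rfl)
        simp only [mem_filter, mem_univ, true_and] at ha hb
        simp only [yyMap, Sym2.map_pair_eq]
        refine hmem _ _ _ ((adj_yy G a b).2 hne) ?_ ?_
        · rw [gcol_y, if_neg ha]
        · rw [gcol_y, if_neg hb]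
    have hd12 : Disjoint T1 T2 := by
      rw [Finset.disjoint_left]
      intro x hx1 hx2
      obtain ⟨⟨e, b⟩, _, rfl⟩ := mem_image.1 hx1
      obtain ⟨⟨e', i⟩, _, h⟩ := mem_image.1 hx2
      simp [xyMap, yzMap, Sym2.eq_iff] at h
    have hd13 : Disjoint T1 T3 := by
      rw [Finset.disjoint_left]
      intro x hx1 hx3
      obtain ⟨⟨e, b⟩, _, rfl⟩ := mem_image.1 hx1
      obtain ⟨p, _, h⟩ := mem_image.1 hx3
      induction p using Sym2.ind with
      | _ a a' => simp [xyMap, yyMap, Sym2.map_pair_eq, Sym2.eq_iff] at h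
    have hd23 : Disjoint T2 T3 := by
      rw [Finset.disjoint_left]
      intro x hx2 hx3
      obtain ⟨⟨e, i⟩, _, rfl⟩ := mem_image.1 hx2
      obtain ⟨p, _, h⟩ := mem_image.1 hx3
      induction p using Sym2.ind with
      | _ a a' => simp [yzMap, yyMap, Sym2.map_pair_eq, Sym2.eq_iff] at h
    have hcard1 : #T1 = k₂ * 2 + (G.edgeFinset.card - k₁ - k₂) * 1 := by
      rw [hT1, card_image_of_injective _ (xyMap_inj G), card_filter_prod
        (fun p : ↥G.edgeSet × Bool => (¬ ∀ x ∈ (p.1 : Sym2 V), f x = true) ∧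
          f (if p.2 then (epts G p.1).1 else (epts G p.1).2) = false)]
      have heach : ∀ e : ↥G.edgeSet,
          #(univ.filter fun b : Bool => (¬ ∀ x ∈ (e : Sym2 V), f x = true) ∧
            f (if b then (epts G e).1 else (epts G e).2) = false) =
          if (∀ x ∈ (e : Sym2 V), f x = true) then 0
          else if (∀ x ∈ (e : Sym2 V), f x = false) then 2 else 1 := by
        intro e
        by_cases hR : ∀ x ∈ (e : Sym2 V), f x = true
        · rw [if_pos hR, Finset.filter_false_of_mem
            (fun b _ hc => hc.1 hR), Finset.card_empty]
        · rw [if_neg hR]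
          by_cases hB : ∀ x ∈ (e : Sym2 V), f x = false
          · rw [if_pos hB, Finset.filter_true_of_mem, Finset.card_univ, Fintype.card_bool]
            intro b _
            refine ⟨hR, ?_⟩
            cases b
            · exact hB _ (epts_snd_mem G e)
            · exact hB _ (epts_fst_mem G e)
          · rw [if_neg hB]
            have hRiff : ¬ (f (epts G e).1 = true ∧ f (epts G e).2 = true) := by
              intro h
              exact hR fun v hv => by
                rcases mem_epts G e v hv with rfl | rfl
                · exact h.1
                · exact h.2
            have hBiff : ¬ (f (epts G e).1 = false ∧ f (epts G e).2 = false) := by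
              intro h
              exact hB fun v hv => by
                rcases mem_epts G e v hv with rfl | rfl
                · exact h.1
                · exact h.2
            cases hf1 : f (epts G e).1 <;> cases hf2 : f (epts G e).2
            · exact absurd ⟨hf1, hf2⟩ hBiff
            · have hset : (univ.filter fun b : Bool => (¬ ∀ x ∈ (e : Sym2 V), f x = true) ∧
                  f (if b then (epts G e).1 else (epts G e).2) = false) = {true} := by
                ext b
                cases b <;> simp [hR, hf1, hf2]
              rw [hset, Finset.card_singleton]
            · have hset : (univ.filter fun b : Bool => (¬ ∀ x ∈ (e : Sym2 V), f x = true) ∧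
                  f (if b then (epts G e).1 else (epts G e).2) = false) = {false} := by
                ext b
                cases b <;> simp [hR, hf1, hf2]
              rw [hset, Finset.card_singleton]
            · exact absurd ⟨hf1, hf2⟩ hRiff
      rw [Finset.sum_congr rfl (fun e _ => heach e)]
      have hpt : ∀ e : ↥G.edgeSet,
          (if (∀ x ∈ (e : Sym2 V), f x = true) then 0
            else if (∀ x ∈ (e : Sym2 V), f x = false) then 2 else 1) =
          (if (∀ x ∈ (e : Sym2 V), f x = false) then 2 else 0) +
            (if (¬ (∀ x ∈ (e : Sym2 V), f x = true) ∧ ¬ (∀ x ∈ (e : Sym2 V), f x = false))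
              then 1 else 0) := by
        intro e
        by_cases hR : ∀ x ∈ (e : Sym2 V), f x = true
        · rw [if_pos hR, if_neg (fun hB => hBnotR e hB hR), if_neg (fun hc => hc.1 hR)]
        · rw [if_neg hR]
          by_cases hB : ∀ x ∈ (e : Sym2 V), f x = false
          · rw [if_pos hB, if_pos hB, if_neg (fun hc => hc.2 hB)]
          · rw [if_neg hB, if_neg hB, if_pos ⟨hR, hB⟩]
      rw [Finset.sum_congr rfl (fun e _ => hpt e), Finset.sum_add_distrib,
        ← Finset.sum_filter, ← Finset.sum_filter, Finset.sum_const, Finset.sum_const,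
        smul_eq_mul, smul_eq_mul, hk2, hmixed]
    have hcard2 : #T2 = (G.edgeFinset.card - k₁) * G.edgeFinset.card ^ 2 := by
      rw [hT2, card_image_of_injective _ (yzMap_inj G), card_filter_prod
        (fun p : ↥G.edgeSet × Fin (G.edgeFinset.card ^ 2) =>
          ¬ ∀ x ∈ (p.1 : Sym2 V), f x = true)]
      have heach : ∀ e : ↥G.edgeSet,
          #(univ.filter fun _ : Fin (G.edgeFinset.card ^ 2) =>
            ¬ ∀ x ∈ (e : Sym2 V), f x = true) =
          if (¬ ∀ x ∈ (e : Sym2 V), f x = true) then G.edgeFinset.card ^ 2 else 0 := by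
        intro e
        by_cases h : ∀ x ∈ (e : Sym2 V), f x = true
        · rw [if_neg (fun hc => hc h), Finset.filter_false_of_mem (fun x _ hc => hc h),
            Finset.card_empty]
        · rw [if_pos h, Finset.filter_true_of_mem (fun x _ => h), Finset.card_univ,
            Fintype.card_fin]
      rw [Finset.sum_congr rfl (fun e _ => heach e), ← Finset.sum_filter, Finset.sum_const,
        smul_eq_mul, hnR]
    have hcard3 : #T3 = (G.edgeFinset.card - k₁).choose 2 := by
      rw [hT3, card_image_of_injective _ (yyMap_inj G), card_sym2_nondiag
        ((univ : Finset ↥G.edgeSet).filter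
          fun e : ↥G.edgeSet => ¬ ∀ x ∈ (e : Sym2 V), f x = true), hnR]
    calc G.edgeFinset.card + k₂ - k₁ + (G.edgeFinset.card - k₁) * G.edgeFinset.card ^ 2 +
        (G.edgeFinset.card - k₁).choose 2
        ≤ #T1 + #T2 + #T3 := by
          rw [hcard1, hcard2, hcard3]
          have h1 : G.edgeFinset.card + k₂ - k₁ ≤ k₂ * 2 + (G.edgeFinset.card - k₁ - k₂) * 1 := by
            omega
          exact Nat.add_le_add_right (Nat.add_le_add_right h1 _) _
      _ = #(T1 ∪ T2 ∪ T3) := by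
          rw [card_union_of_disjoint (Finset.disjoint_union_left.2 ⟨hd13, hd23⟩),
            card_union_of_disjoint hd12]
      _ ≤ monoEdges (splitRed G) (gcol G f) false := by
          refine hmono _ _ ?_
          intro x hx
          rcases mem_union.1 hx with h | h
          · rcases mem_union.1 h with h | h
            · exact hT1sub x h
            · exact hT2sub x h
          · exact hT3sub x h
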